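/- Let μ ≥ 2 be an even integer, W a positive integer, K = μW + 1, and ψ_u ∈ (0, 2π) with t := 3/4 − ψ_u/(2π) such that tμ is not an integer; let K₁(ψ_u) = {k ∈ {2, …, K} : cos(ψ_u + (2π/μ)(k−1)) > 0} and V = sin(π/μ)/W. Then for every interferer phase ψ̃ ∈ (0, 2π) and every ζ̃ > 0, the received interference power satisfies ζ̃·[Σ_{k ∈ K₁(ψ_u)} cos(ψ̃ + (2π/μ)(k−1))]² = (ζ̃/V²)·sin²(ψ̃ − π/μ + (2π/μ)⌈tμ⌉). -/

import Mathlib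

open Real Finset
open scoped Classical

private lemma int_sum_Ico_split (f : ℤ → ℝ) {a b c : ℤ} (h1 : a ≤ b) (h2 : b ≤ c) :
    ∑ i ∈ Finset.Ico a b, f i + ∑ i ∈ Finset.Ico b c, f i = ∑ i ∈ Finset.Ico a c, f i := by
  rw [← Finset.sum_union (Finset.Ico_disjoint_Ico_consecutive a b c),
    Finset.Ico_union_Ico_eq_Ico h1 h2]

private lemma int_Ico_single (x : ℤ) : Finset.Ico x (x + 1) = {x} := by
  have h : Finset.Ico x (x + 1) = Finset.Icc x x := rfl
  rw [h, Finset.Icc_self]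

private lemma sum_Ico_int_eq_range (g : ℤ → ℝ) (a : ℤ) (n : ℕ) :
    ∑ m ∈ Finset.Ico a (a + n), g m = ∑ i ∈ Finset.range n, g (a + i) := by
  induction n with
  | zero => simp
  | succ n ih =>
    have h1 : a + ((n + 1 : ℕ) : ℤ) = (a + n) + 1 := by push_cast; ring
    rw [h1, ← int_sum_Ico_split g (by omega : a ≤ a + (n : ℤ)) (by omega), ih,
      int_Ico_single, Finset.sum_singleton, Finset.sum_range_succ]

private lemma periodic_window (g : ℤ → ℝ) (p : ℕ) (hper : ∀ m : ℤ, g (m + p) = g m)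
    (a b : ℤ) :
    ∑ m ∈ Finset.Ico a (a + p), g m = ∑ m ∈ Finset.Ico b (b + p), g m := by
  have step : ∀ c : ℤ, ∑ m ∈ Finset.Ico (c + 1) (c + 1 + p), g m
      = ∑ m ∈ Finset.Ico c (c + p), g m := by
    intro c
    rw [sum_Ico_int_eq_range g (c + 1) p, sum_Ico_int_eq_range g c p]
    have e1 : ∀ i : ℕ, g (c + 1 + (i : ℤ)) = g (c + ((i + 1 : ℕ) : ℤ)) := by
      intro i; congr 1; push_cast; ring
    rw [Finset.sum_congr rfl (fun i _ => e1 i)]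
    have e2 := Finset.sum_range_sub (fun i : ℕ => g (c + (i : ℤ))) p
    simp only [Nat.cast_zero, add_zero] at e2
    rw [Finset.sum_sub_distrib] at e2
    have e3 : g (c + ((p : ℕ) : ℤ)) = g c := hper c
    rw [e3] at e2
    linarith
  have all0 : ∀ b : ℤ, ∑ m ∈ Finset.Ico b (b + p), g m
      = ∑ m ∈ Finset.Ico (0 : ℤ) ((0 : ℤ) + p), g m := by
    intro b
    induction b using Int.induction_on with
    | zero => rfl
    | succ k ih => rw [step (k : ℤ)]; exact ih
    | pred k ih =>
      have hs := step (-(k : ℤ) - 1)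
      rw [show -(k : ℤ) - 1 + 1 = -(k : ℤ) by ring] at hs
      rw [← hs]; exact ih
  rw [all0 a, all0 b]

private lemma periodic_sum_mul (g : ℤ → ℝ) (p : ℕ) (hper : ∀ m : ℤ, g (m + p) = g m)
    (a : ℤ) (n : ℕ) :
    ∑ m ∈ Finset.Ico a (a + (p * n : ℕ)), g m = n * ∑ m ∈ Finset.Ico a (a + p), g m := by
  induction n with
  | zero => simp
  | succ n ih =>
    have h1 : a + ((p * (n + 1) : ℕ) : ℤ) = (a + (p * n : ℕ)) + p := by push_cast; ring
    rw [h1, ← int_sum_Ico_split g (by omega : a ≤ a + ((p * n : ℕ) : ℤ)) (by omega), ih,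
      periodic_window g p hper (a + (p * n : ℕ)) a]
    push_cast; ring

private lemma sum_cos_arith (x δ : ℝ) (n : ℕ) :
    2 * Real.sin (δ / 2) * ∑ i ∈ Finset.range n, Real.cos (x + δ * i)
      = Real.sin (x + δ * n - δ / 2) - Real.sin (x - δ / 2) := by
  induction n with
  | zero => simp
  | succ n ih =>
    rw [Finset.sum_range_succ, mul_add, ih]
    have key : 2 * Real.sin (δ / 2) * Real.cos (x + δ * n)
        = Real.sin ((x + δ * n) + δ / 2) - Real.sin ((x + δ * n) - δ / 2) := by
      rw [Real.sin_add, Real.sin_sub]; ring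
    have harg : x + δ * ((n + 1 : ℕ) : ℝ) - δ / 2 = (x + δ * n) + δ / 2 := by push_cast; ring
    rw [key, harg]
    ring_nf

/-- Theorem 3: closed form of the received CUMA in-phase interference power from an
interfering user with phase `ψ̃` and path-loss `ζ̃`. -/
theorem cuma_interference_power_closed_form (μ W : ℕ) (hμ2 : 2 ≤ μ) (hμe : Even μ)
    (hW : 1 ≤ W)
    (ψu : ℝ) (hψu0 : 0 < ψu) (hψu2 : ψu < 2 * π)
    (t : ℝ) (ht : t = 3 / 4 - ψu / (2 * π))
    (hni : ∀ n : ℤ, t * μ ≠ (n : ℝ))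
    (V : ℝ) (hV : V = Real.sin (π / μ) / W)
    (ψi ζi : ℝ) (hψi0 : 0 < ψi) (hψi2 : ψi < 2 * π) (hζi : 0 < ζi) :
    ζi * (∑ k ∈ (Finset.Icc 2 (μ * W + 1)).filter
          (fun k => 0 < Real.cos (ψu + 2 * π / μ * ((k : ℝ) - 1))),
        Real.cos (ψi + 2 * π / μ * ((k : ℝ) - 1))) ^ 2
      = ζi / V ^ 2 * Real.sin (ψi - π / μ + 2 * π / μ * (⌈t * μ⌉ : ℝ)) ^ 2 := by
  have hπ := Real.pi_pos
  have hμR : (0 : ℝ) < μ := by exact_mod_cast (by omega : 0 < μ)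
  have hμ2R : (2 : ℝ) ≤ μ := by exact_mod_cast hμ2
  have hμne : (μ : ℝ) ≠ 0 := ne_of_gt hμR
  set A : ℝ := 2 * π / μ with hA
  have hApos : 0 < A := by rw [hA]; positivity
  have hAμ : A * μ = 2 * π := by rw [hA]; field_simp
  set c : ℤ := ⌈t * μ⌉ with hc
  have hc1 : (c : ℝ) - 1 < t * μ := by
    have h := Int.ceil_lt_add_one (t * (μ : ℝ)); rw [← hc] at h; linarith
  have hc2 : t * μ < c := lt_of_le_of_ne (Int.le_ceil _) (hni c)
  obtain ⟨h, hμh⟩ := hμe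
  have hh1 : 1 ≤ h := by omega
  have hhR : (h : ℝ) + (h : ℝ) = μ := by exact_mod_cast hμh.symm
  have hμZ : (μ : ℤ) = (h : ℤ) + (h : ℤ) := by exact_mod_cast hμh
  have hAh : A * (h : ℝ) = π := by
    have e : A * ((h : ℝ) + (h : ℝ)) = 2 * π := by rw [hhR]; exact hAμ
    have e2 : A * ((h : ℝ) + (h : ℝ)) = A * (h : ℝ) + A * (h : ℝ) := by ring
    linarith
  have hψuEq : ψu = 3 * π / 2 - 2 * π * t := by
    rw [ht]; field_simp; ring
  -- the periodic summand
  set g : ℤ → ℝ := fun m =>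
    if 0 < Real.cos (ψu + A * m) then Real.cos (ψi + A * m) else 0 with hg
  have hper : ∀ m : ℤ, g (m + μ) = g m := by
    intro m
    have harg : ∀ ψ : ℝ, ψ + A * ((m : ℝ) + μ) = (ψ + A * m) + 2 * π := by
      intro ψ; rw [mul_add, hAμ]; ring
    simp only [hg, Int.cast_add, Int.cast_natCast, harg, Real.cos_add_two_pi]
  have key_angle : ∀ m : ℤ, ψu + A * m = 3 * π / 2 + A * ((m : ℝ) - t * μ) := by
    intro m
    have hAt : A * (t * (μ : ℝ)) = 2 * π * t := by rw [hA]; field_simp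
    rw [hψuEq, mul_sub, hAt]; ring
  -- Step 1: rewrite the filtered sum as an integer sum over one big window
  have step1 : (∑ k ∈ (Finset.Icc 2 (μ * W + 1)).filter
          (fun k => 0 < Real.cos (ψu + A * ((k : ℝ) - 1))),
        Real.cos (ψi + A * ((k : ℝ) - 1)))
      = ∑ m ∈ Finset.Ico (1 : ℤ) (1 + (μ * W : ℕ)), g m := by
    have hbind : ((Finset.Icc 2 (μ * W + 1) : Finset ℕ) >>= fun a => (pure ((a : ℝ)) : Finset ℝ))
        = (Finset.Icc 2 (μ * W + 1)).image (fun a : ℕ => (a : ℝ)) := by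
      exact Finset.sup_singleton_apply _ _
    rw [Finset.sum_filter]
    rw [hbind]
    rw [Finset.sum_image (fun x _ y _ hxy => Nat.cast_injective hxy)]
    rw [← Finset.Ico_add_one_right_eq_Icc,
      show μ * W + 1 + 1 = μ * W + 2 from rfl,
      Finset.sum_Ico_eq_sum_range,
      show μ * W + 2 - 2 = μ * W from by omega,
      sum_Ico_int_eq_range g 1 (μ * W)]
    apply Finset.sum_congr rfl
    intro i _
    have harg : ((2 + i : ℕ) : ℝ) - 1 = (((1 + (i : ℤ)) : ℤ) : ℝ) := by push_cast; ring
    simp only [hg, harg]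
  -- Step 2: reduce to one period starting at c - μ
  have step2 : ∑ m ∈ Finset.Ico (1 : ℤ) (1 + (μ * W : ℕ)), g m
      = W * ∑ m ∈ Finset.Ico (c - μ) (c - μ + μ), g m := by
    rw [periodic_sum_mul g μ hper 1 W, periodic_window g μ hper 1 (c - μ)]
  -- positive / negative parts
  have pos_part : ∀ m ∈ Finset.Ico (c - μ) (c - (h : ℤ)), g m = Real.cos (ψi + A * m) := by
    intro m hm
    rw [Finset.mem_Ico] at hm
    have hmlo : (c : ℝ) - μ ≤ m := by exact_mod_cast hm.1
    have hmhi : (m : ℝ) ≤ (c : ℝ) - h - 1 := by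
      have hz : (m : ℤ) ≤ c - h - 1 := by omega
      exact_mod_cast hz
    have hθlo : -(π / 2) < ψu + A * m := by
      rw [key_angle m]
      have h1 : -((μ : ℝ)) < (m : ℝ) - t * μ := by linarith
      have h2 := mul_lt_mul_of_pos_left h1 hApos
      have h3 : A * (-((μ : ℝ))) = -(2 * π) := by rw [mul_neg, hAμ]
      linarith
    have hθhi : ψu + A * m < π / 2 := by
      rw [key_angle m]
      have h1 : (m : ℝ) - t * μ < -((h : ℝ)) := by linarith
      have h2 := mul_lt_mul_of_pos_left h1 hApos
      have h3 : A * (-((h : ℝ))) = -π := by rw [mul_neg, hAh]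
      linarith
    have hcpos : 0 < Real.cos (ψu + A * m) := Real.cos_pos_of_mem_Ioo ⟨hθlo, hθhi⟩
    simp only [hg, if_pos hcpos]
  have neg_part : ∀ m ∈ Finset.Ico (c - (h : ℤ)) c, g m = 0 := by
    intro m hm
    rw [Finset.mem_Ico] at hm
    have hmlo : (c : ℝ) - h ≤ m := by exact_mod_cast hm.1
    have hmhi : (m : ℝ) ≤ (c : ℝ) - 1 := by
      have hz : (m : ℤ) ≤ c - 1 := by omega
      exact_mod_cast hz
    have hθlo : π / 2 < ψu + A * m := by
      rw [key_angle m]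
      have h1 : -((h : ℝ)) < (m : ℝ) - t * μ := by linarith
      have h2 := mul_lt_mul_of_pos_left h1 hApos
      have h3 : A * (-((h : ℝ))) = -π := by rw [mul_neg, hAh]
      linarith
    have hθhi : ψu + A * m < π + π / 2 := by
      rw [key_angle m]
      have h1 : (m : ℝ) - t * μ < 0 := by linarith
      have h2 := mul_neg_of_pos_of_neg hApos h1
      linarith
    have hcneg : Real.cos (ψu + A * m) < 0 :=
      Real.cos_neg_of_pi_div_two_lt_of_lt hθlo hθhi
    simp only [hg, if_neg (not_lt.mpr (le_of_lt hcneg))]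
  -- Step 3: evaluate the one-period sum
  have hsplit : c - (μ : ℤ) + μ = c := by ring
  have hmid1 : c - (μ : ℤ) ≤ c - (h : ℤ) := by omega
  have hmid2 : c - (h : ℤ) ≤ c := by omega
  have step3 : ∑ m ∈ Finset.Ico (c - μ) (c - μ + μ), g m
      = ∑ m ∈ Finset.Ico (c - μ) (c - (h : ℤ)), Real.cos (ψi + A * m) := by
    rw [hsplit, ← int_sum_Ico_split g hmid1 hmid2,
      Finset.sum_congr rfl pos_part, Finset.sum_congr rfl neg_part]
    simp
  -- Step 4: closed form for the arithmetic cosine sum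
  have hsinpos : 0 < Real.sin (π / μ) := by
    apply Real.sin_pos_of_pos_of_lt_pi
    · positivity
    · rw [div_lt_iff₀ hμR]; nlinarith
  have hsne : Real.sin (π / μ) ≠ 0 := ne_of_gt hsinpos
  have hA2 : A / 2 = π / μ := by rw [hA]; ring
  have hrange : c - (μ : ℤ) + ((h : ℕ) : ℤ) = c - (h : ℤ) := by omega
  have step4 : ∑ m ∈ Finset.Ico (c - μ) (c - (h : ℤ)), Real.cos (ψi + A * m)
      = -Real.sin (ψi - π / μ + A * c) / Real.sin (π / μ) := by
    rw [← hrange, sum_Ico_int_eq_range (fun m => Real.cos (ψi + A * m)) (c - μ) h]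
    have hterm : ∀ i : ℕ, Real.cos (ψi + A * ((c - (μ : ℤ) + (i : ℤ) : ℤ) : ℝ))
        = Real.cos ((ψi + A * ((c : ℝ) - μ)) + A * i) := by
      intro i; congr 1; push_cast; ring
    rw [Finset.sum_congr rfl (fun i _ => hterm i)]
    have hts := sum_cos_arith (ψi + A * ((c : ℝ) - μ)) A h
    have harg1 : ψi + A * ((c : ℝ) - μ) + A * (h : ℝ) - A / 2
        = (ψi + A * ((c : ℝ) - μ) - A / 2) + π := by rw [hAh]; ring
    rw [harg1, Real.sin_add_pi] at hts
    have harg2 : ψi + A * ((c : ℝ) - μ) - A / 2 = (ψi - π / μ + A * c) - 2 * π := by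
      rw [mul_sub, hAμ, ← hA2]; ring
    rw [harg2, Real.sin_sub_two_pi] at hts
    rw [hA2] at hts
    rw [eq_div_iff hsne]
    linarith
  -- assemble
  rw [step1, step2, step3, step4, hV]
  have hWR : (0 : ℝ) < (W : ℝ) := by exact_mod_cast (by omega : 0 < W)
  have hWne : (W : ℝ) ≠ 0 := ne_of_gt hWR
  field_simp
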